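/- For real β > 0, ∫_{-π}^{π} (cosh(β(π - |θ|)) / (2β sinh(πβ)))² dθ = π/(4β² sinh²(πβ)) + cosh(πβ)/(4β³ sinh(πβ)). -/

import Mathlib

open Real MeasureTheory

lemma cosh_sq_antideriv (β a : ℝ) (hβ : 0 < β) (θ : ℝ) :
    HasDerivAt (fun θ : ℝ => (θ - a) / 2 + Real.sinh (2 * β * (θ - a)) / (4 * β))
      (Real.cosh (β * (θ - a)) ^ 2) θ := by
  have h1 : HasDerivAt (fun θ : ℝ => (θ - a) / 2) (1 / 2) θ := by
    simpa using ((hasDerivAt_id θ).sub_const a).div_const 2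
  have h2 : HasDerivAt (fun θ : ℝ => 2 * β * (θ - a)) (2 * β) θ := by
    simpa using (((hasDerivAt_id θ).sub_const a).const_mul (2 * β))
  have h3 : HasDerivAt (fun θ : ℝ => Real.sinh (2 * β * (θ - a)))
      (Real.cosh (2 * β * (θ - a)) * (2 * β)) θ :=
    (Real.hasDerivAt_sinh _).comp θ h2
  have h4 := h1.add (h3.div_const (4 * β))
  refine HasDerivAt.congr_deriv h4 ?_
  have hc : Real.cosh (2 * β * (θ - a)) = 2 * Real.cosh (β * (θ - a)) ^ 2 - 1 := by
    have h5 := Real.cosh_two_mul (β * (θ - a))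
    have h6 := Real.cosh_sq (β * (θ - a))
    rw [show 2 * β * (θ - a) = 2 * (β * (θ - a)) by ring]
    nlinarith [Real.cosh_sq (β * (θ - a))]
  rw [hc]
  field_simp
  ring

lemma cosh_sq_integral (β a b c : ℝ) (hβ : 0 < β) :
    ∫ θ in b..c, Real.cosh (β * (θ - a)) ^ 2 =
      ((c - a) / 2 + Real.sinh (2 * β * (c - a)) / (4 * β))
      - ((b - a) / 2 + Real.sinh (2 * β * (b - a)) / (4 * β)) := by
  apply intervalIntegral.integral_eq_sub_of_hasDerivAt
  · intro θ _; exact cosh_sq_antideriv β a hβ θ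
  · apply Continuous.intervalIntegrable
    continuity

theorem circle_self_energy_density (β : ℝ) (hβ : 0 < β) :
    (∫ θ in (-Real.pi)..Real.pi,
        (Real.cosh (β * (Real.pi - |θ|)) / (2 * β * Real.sinh (Real.pi * β))) ^ 2)
      = Real.pi / (4 * β ^ 2 * Real.sinh (Real.pi * β) ^ 2)
        + Real.cosh (Real.pi * β) / (4 * β ^ 3 * Real.sinh (Real.pi * β)) := by
  have hπ := Real.pi_pos
  have hs : Real.sinh (Real.pi * β) ≠ 0 :=
    ne_of_gt (by rw [Real.sinh_pos_iff]; positivity)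
  set c : ℝ := (2 * β * Real.sinh (Real.pi * β)) ^ 2 with hc
  have hcne : c ≠ 0 := by positivity
  have key : (∫ θ in (-Real.pi)..Real.pi, Real.cosh (β * (Real.pi - |θ|)) ^ 2)
      = Real.pi + Real.sinh (2 * (Real.pi * β)) / (2 * β) := by
    have hint : IntervalIntegrable (fun θ : ℝ => Real.cosh (β * (Real.pi - |θ|)) ^ 2)
        volume (-Real.pi) Real.pi := by
      apply Continuous.intervalIntegrable; continuity
    have h1 : IntervalIntegrable (fun θ : ℝ => Real.cosh (β * (Real.pi - |θ|)) ^ 2)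
        volume (-Real.pi) 0 := by apply Continuous.intervalIntegrable; continuity
    have h2 : IntervalIntegrable (fun θ : ℝ => Real.cosh (β * (Real.pi - |θ|)) ^ 2)
        volume 0 Real.pi := by apply Continuous.intervalIntegrable; continuity
    have hsplit := intervalIntegral.integral_add_adjacent_intervals h1 h2
    rw [← hsplit]
    have hleft : (∫ θ in (-Real.pi)..(0:ℝ), Real.cosh (β * (Real.pi - |θ|)) ^ 2)
        = ∫ θ in (-Real.pi)..(0:ℝ), Real.cosh (β * (θ - (-Real.pi))) ^ 2 := by
      apply intervalIntegral.integral_congr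
      intro θ hθ
      rw [Set.uIcc_of_le (by linarith)] at hθ
      have : |θ| = -θ := abs_of_nonpos hθ.2
      simp only [this]; ring_nf
    have hright : (∫ θ in (0:ℝ)..Real.pi, Real.cosh (β * (Real.pi - |θ|)) ^ 2)
        = ∫ θ in (0:ℝ)..Real.pi, Real.cosh ((-β) * (θ - Real.pi)) ^ 2 := by
      apply intervalIntegral.integral_congr
      intro θ hθ
      rw [Set.uIcc_of_le (by linarith)] at hθ
      have : |θ| = θ := abs_of_nonneg hθ.1
      simp only [this]; ring_nf
    have hβ' : (0:ℝ) < β := hβ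
    rw [hleft, hright, cosh_sq_integral β (-Real.pi) (-Real.pi) 0 hβ]
    have : (∫ θ in (0:ℝ)..Real.pi, Real.cosh ((-β) * (θ - Real.pi)) ^ 2)
        = ∫ θ in (0:ℝ)..Real.pi, Real.cosh (β * (θ - Real.pi)) ^ 2 := by
      congr 1; ext θ
      rw [show (-β) * (θ - Real.pi) = -(β * (θ - Real.pi)) by ring, Real.cosh_neg]
    rw [this, cosh_sq_integral β Real.pi 0 Real.pi hβ]
    simp only [sub_self, Real.sinh_zero, mul_zero, zero_div, add_zero, zero_add, neg_sub]
    rw [show 2 * β * (0 - Real.pi) = -(2 * (Real.pi * β)) by ring, Real.sinh_neg]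
    field_simp
    ring
  calc (∫ θ in (-Real.pi)..Real.pi,
        (Real.cosh (β * (Real.pi - |θ|)) / (2 * β * Real.sinh (Real.pi * β))) ^ 2)
      = (∫ θ in (-Real.pi)..Real.pi, Real.cosh (β * (Real.pi - |θ|)) ^ 2) / c := by
        rw [← intervalIntegral.integral_div]
        congr 1; ext θ; rw [div_pow, hc]
    _ = (Real.pi + Real.sinh (2 * (Real.pi * β)) / (2 * β)) / c := by rw [key]
    _ = Real.pi / (4 * β ^ 2 * Real.sinh (Real.pi * β) ^ 2)
        + Real.cosh (Real.pi * β) / (4 * β ^ 3 * Real.sinh (Real.pi * β)) := by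
        rw [hc, Real.sinh_two_mul]
        field_simp
        ring
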